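/- Suppose 0 < r₁ < r₂, the pit has radius 1, and a head of radius r₁ is surrounded by three beads all of radius r₂ (necklace code 0,1:222) with the three equal dihedral angles summing to 2π (each equal to 2π/3). Then −r₁²r₂ + 3r₁² + r₁r₂ + 3r₁ − r₂ = 0. -/

import Mathlib

open Real

theorem stmt_10 (r₁ r₂ : ℝ) (h₁ : 0 < r₁) (h₁₂ : r₁ < r₂)
    (M22 M12 : ℝ)
    (hM22 : M22 ∈ Set.Ioo 0 π) (hM12 : M12 ∈ Set.Ioo 0 π)
    (hcM22 : Real.cos M22 =
      ((1 + r₂)^2 + (1 + r₂)^2 - (r₂ + r₂)^2) / (2 * (1 + r₂) * (1 + r₂)))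
    (hcM12 : Real.cos M12 =
      ((1 + r₁)^2 + (1 + r₂)^2 - (r₁ + r₂)^2) / (2 * (1 + r₁) * (1 + r₂)))
    (hθ : (Real.cos M22 - (Real.cos M12)^2) / (Real.sin M12)^2 = -(1/2)) :
    -r₁^2 * r₂ + 3 * r₁^2 + r₁ * r₂ + 3 * r₁ - r₂ = 0 := by
  have hs : 0 < Real.sin M12 := Real.sin_pos_of_pos_of_lt_pi hM12.1 hM12.2
  have hne : (Real.sin M12)^2 ≠ 0 := by positivity
  have h2 : 0 < r₂ := h₁.trans h₁₂
  have ha : (1 : ℝ) + r₁ ≠ 0 := by positivity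
  have hb : (1 : ℝ) + r₂ ≠ 0 := by positivity
  have key : Real.cos M22 - (Real.cos M12)^2 = -(1/2) * (Real.sin M12)^2 := by
    field_simp at hθ; linarith
  rw [Real.sin_sq] at key
  have key2 : 2 * Real.cos M22 + 1 = 3 * (Real.cos M12)^2 := by linarith
  have e22 : Real.cos M22 = 1 - 2 * r₂^2 / (1 + r₂)^2 := by
    rw [hcM22]; field_simp; ring
  have e12 : Real.cos M12 = 1 - 2 * r₁ * r₂ / ((1 + r₁) * (1 + r₂)) := by
    rw [hcM12]; field_simp; ring
  rw [e22, e12] at key2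
  field_simp at key2
  have h4 : 4 * r₂ * (1 + r₂)^2 * (-r₁^2 * r₂ + 3 * r₁^2 + r₁ * r₂ + 3 * r₁ - r₂) = 0 := by
    linear_combination (1 + r₂)^2 * key2
  have hc : (4 : ℝ) * r₂ * (1 + r₂)^2 ≠ 0 := by positivity
  exact (mul_eq_zero.mp h4).resolve_left hc
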